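/- arXiv:2305.06664 — 3 statements merged into one kernel-verified Lean document; each statement's English description precedes it below -/
import Mathlib

section
/- Let X be a contractible object of C₂(P), i.e. 1_X ∼ 0. Then there exist finitely generated projective right A-modules P and Q, unique up to isomorphism of A-modules, such that X ≅ K_P ⊕ K_Q^* in C₂(P). -/
open CategoryTheory

universe u

noncomputable section

variable (R : Type u) [Ring R]

structure TwoCx : Type (u + 1) where
  X1 : ModuleCat.{u} R
  X0 : ModuleCat.{u} R
  fin1 : Module.Finite R X1
  proj1 : Module.Projective R X1
  fin0 : Module.Finite R X0
  proj0 : Module.Projective R X0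
  d1 : X1 ⟶ X0
  d0 : X0 ⟶ X1
  dd1 : d1 ≫ d0 = 0
  dd0 : d0 ≫ d1 = 0

variable {R}

@[ext]
structure TwoHom (X Y : TwoCx R) : Type u where
  f1 : X.X1 ⟶ Y.X1
  f0 : X.X0 ⟶ Y.X0
  comm1 : X.d1 ≫ f0 = f1 ≫ Y.d1
  comm0 : X.d0 ≫ f1 = f0 ≫ Y.d0

instance : CategoryStruct (TwoCx R) where
  Hom := TwoHom
  id X := ⟨𝟙 X.X1, 𝟙 X.X0, by simp, by simp⟩
  comp {X Y Z} f g :=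
    ⟨f.f1 ≫ g.f1, f.f0 ≫ g.f0, by
      rw [← Category.assoc, f.comm1, Category.assoc, g.comm1, ← Category.assoc], by
      rw [← Category.assoc, f.comm0, Category.assoc, g.comm0, ← Category.assoc]⟩

@[simp] theorem id_f1 (X : TwoCx R) : TwoHom.f1 (𝟙 X) = 𝟙 X.X1 := rfl
@[simp] theorem id_f0 (X : TwoCx R) : TwoHom.f0 (𝟙 X) = 𝟙 X.X0 := rfl
@[simp] theorem comp_f1 {X Y Z : TwoCx R} (f : X ⟶ Y) (g : Y ⟶ Z) :
    TwoHom.f1 (f ≫ g) = TwoHom.f1 f ≫ TwoHom.f1 g := rfl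
@[simp] theorem comp_f0 {X Y Z : TwoCx R} (f : X ⟶ Y) (g : Y ⟶ Z) :
    TwoHom.f0 (f ≫ g) = TwoHom.f0 f ≫ TwoHom.f0 g := rfl

@[ext] theorem hom_ext {X Y : TwoCx R} {f g : X ⟶ Y}
    (h1 : TwoHom.f1 f = TwoHom.f1 g) (h0 : TwoHom.f0 f = TwoHom.f0 g) : f = g :=
  TwoHom.ext h1 h0

instance : Category (TwoCx R) where
  id_comp f := by ext <;> simp
  comp_id f := by ext <;> simp
  assoc f g h := by ext <;> simp

section HomGroup

variable {X Y : TwoCx R}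

instance : Zero (X ⟶ Y) :=
  ⟨TwoHom.mk 0 0 (by simp) (by simp)⟩

@[simp] theorem zero_f1 : TwoHom.f1 (0 : X ⟶ Y) = 0 := rfl
@[simp] theorem zero_f0 : TwoHom.f0 (0 : X ⟶ Y) = 0 := rfl

instance : Add (X ⟶ Y) :=
  ⟨fun f g => TwoHom.mk (f.f1 + g.f1) (f.f0 + g.f0)
    (by rw [Preadditive.comp_add, f.comm1, g.comm1, ← Preadditive.add_comp])
    (by rw [Preadditive.comp_add, f.comm0, g.comm0, ← Preadditive.add_comp])⟩

@[simp] theorem add_f1 (f g : X ⟶ Y) :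
    TwoHom.f1 (f + g) = TwoHom.f1 f + TwoHom.f1 g := rfl
@[simp] theorem add_f0 (f g : X ⟶ Y) :
    TwoHom.f0 (f + g) = TwoHom.f0 f + TwoHom.f0 g := rfl

instance : Neg (X ⟶ Y) :=
  ⟨fun f => TwoHom.mk (-f.f1) (-f.f0)
    (by rw [Preadditive.comp_neg, f.comm1, ← Preadditive.neg_comp])
    (by rw [Preadditive.comp_neg, f.comm0, ← Preadditive.neg_comp])⟩

@[simp] theorem neg_f1 (f : X ⟶ Y) : TwoHom.f1 (-f) = -TwoHom.f1 f := rfl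
@[simp] theorem neg_f0 (f : X ⟶ Y) : TwoHom.f0 (-f) = -TwoHom.f0 f := rfl

instance : AddCommGroup (X ⟶ Y) where
  add := (· + ·)
  zero := 0
  neg := Neg.neg
  add_assoc a b c := by ext <;> simp [add_assoc]
  zero_add a := by ext <;> simp
  add_zero a := by ext <;> simp
  add_comm a b := by ext <;> simp [add_comm]
  neg_add_cancel a := by ext <;> simp
  nsmul := nsmulRec
  zsmul := zsmulRec

@[simp] theorem sub_f1 (f g : X ⟶ Y) :
    TwoHom.f1 (f - g) = TwoHom.f1 f - TwoHom.f1 g := by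
  show TwoHom.f1 (f + -g) = _
  rw [add_f1, neg_f1, sub_eq_add_neg]

@[simp] theorem sub_f0 (f g : X ⟶ Y) :
    TwoHom.f0 (f - g) = TwoHom.f0 f - TwoHom.f0 g := by
  show TwoHom.f0 (f + -g) = _
  rw [add_f0, neg_f0, sub_eq_add_neg]

end HomGroup

instance : Preadditive (TwoCx R) where
  add_comp := by intros; ext <;> simp
  comp_add := by intros; ext <;> simp

def Homotopic {X Y : TwoCx R} (f g : X ⟶ Y) : Prop :=
  ∃ (h1 : X.X1 ⟶ Y.X0) (h0 : X.X0 ⟶ Y.X1),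
    TwoHom.f1 f - TwoHom.f1 g = h1 ≫ Y.d0 + X.d1 ≫ h0 ∧
    TwoHom.f0 f - TwoHom.f0 g = h0 ≫ Y.d1 + X.d0 ≫ h1

def Contractible (X : TwoCx R) : Prop := Homotopic (𝟙 X) (0 : X ⟶ X)

def IsHtpEquiv {X Y : TwoCx R} (f : X ⟶ Y) : Prop :=
  ∃ g : Y ⟶ X, Homotopic (f ≫ g) (𝟙 X) ∧ Homotopic (g ≫ f) (𝟙 Y)

def HtpEquiv (X Y : TwoCx R) : Prop := ∃ f : X ⟶ Y, IsHtpEquiv f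

def modRad (M : ModuleCat.{u} R) : Submodule R M :=
  sInf {N : Submodule R M | IsCoatom N}

def RadicalCx (X : TwoCx R) : Prop :=
  LinearMap.range X.d1.hom ≤ modRad X.X0 ∧ LinearMap.range X.d0.hom ≤ modRad X.X1

def dsum (X Y : TwoCx R) : TwoCx R where
  X1 := ModuleCat.of R (X.X1 × Y.X1)
  X0 := ModuleCat.of R (X.X0 × Y.X0)
  fin1 := by haveI := X.fin1; haveI := Y.fin1; exact (inferInstance : Module.Finite R (X.X1 × Y.X1))
  proj1 := by haveI := X.proj1; haveI := Y.proj1; exact (inferInstance : Module.Projective R (X.X1 × Y.X1))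
  fin0 := by haveI := X.fin0; haveI := Y.fin0; exact (inferInstance : Module.Finite R (X.X0 × Y.X0))
  proj0 := by haveI := X.proj0; haveI := Y.proj0; exact (inferInstance : Module.Projective R (X.X0 × Y.X0))
  d1 := ModuleCat.ofHom (LinearMap.prodMap X.d1.hom Y.d1.hom)
  d0 := ModuleCat.ofHom (LinearMap.prodMap X.d0.hom Y.d0.hom)
  dd1 := by
    have h1 : LinearMap.comp X.d0.hom X.d1.hom = 0 := by
      rw [← ModuleCat.hom_comp, X.dd1, ModuleCat.hom_zero]
    have h2 : LinearMap.comp Y.d0.hom Y.d1.hom = 0 := by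
      rw [← ModuleCat.hom_comp, Y.dd1, ModuleCat.hom_zero]
    apply ModuleCat.hom_ext
    rw [ModuleCat.hom_comp, ModuleCat.hom_ofHom, ModuleCat.hom_ofHom, ModuleCat.hom_zero,
      LinearMap.prodMap_comp, h1, h2, LinearMap.prodMap_zero]
  dd0 := by
    have h1 : LinearMap.comp X.d1.hom X.d0.hom = 0 := by
      rw [← ModuleCat.hom_comp, X.dd0, ModuleCat.hom_zero]
    have h2 : LinearMap.comp Y.d1.hom Y.d0.hom = 0 := by
      rw [← ModuleCat.hom_comp, Y.dd0, ModuleCat.hom_zero]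
    apply ModuleCat.hom_ext
    rw [ModuleCat.hom_comp, ModuleCat.hom_ofHom, ModuleCat.hom_ofHom, ModuleCat.hom_zero,
      LinearMap.prodMap_comp, h1, h2, LinearMap.prodMap_zero]

def kP (P : ModuleCat.{u} R) (h1 : Module.Finite R P) (h2 : Module.Projective R P) : TwoCx R :=
  ⟨P, P, h1, h2, h1, h2, 𝟙 P, 0, by simp, by simp⟩

def kS (P : ModuleCat.{u} R) (h1 : Module.Finite R P) (h2 : Module.Projective R P) : TwoCx R :=
  ⟨P, P, h1, h2, h1, h2, 0, 𝟙 P, by simp, by simp⟩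

def starCx (X : TwoCx R) : TwoCx R :=
  ⟨X.X0, X.X1, X.fin0, X.proj0, X.fin1, X.proj1, -X.d0, -X.d1,
    by simp [X.dd0], by simp [X.dd1]⟩

-- ## The homotopy category
variable (R) in
def htpRel : HomRel (TwoCx R) := fun _ _ f g => Homotopic f g

abbrev KTwo (R : Type u) [Ring R] := CategoryTheory.Quotient (htpRel R)

def KFun (R : Type u) [Ring R] : TwoCx R ⥤ KTwo R := Quotient.functor _

-- ## Short exact sequences
structure SESData (Y Z X : TwoCx R) where
  a : Y ⟶ Z
  b : Z ⟶ X
  inj1 : Function.Injective (TwoHom.f1 a)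
  inj0 : Function.Injective (TwoHom.f0 a)
  surj1 : Function.Surjective (TwoHom.f1 b)
  surj0 : Function.Surjective (TwoHom.f0 b)
  exact1 : LinearMap.range (TwoHom.f1 a).hom = LinearMap.ker (TwoHom.f1 b).hom
  exact0 : LinearMap.range (TwoHom.f0 a).hom = LinearMap.ker (TwoHom.f0 b).hom

def SESEquiv {Y X Z Z' : TwoCx R} (s : SESData Y Z X) (t : SESData Y Z' X) : Prop :=
  ∃ e : Z ≅ Z', s.a ≫ e.hom = t.a ∧ e.hom ≫ t.b = s.b

/-- The two components of a morphism `X ⟶ Y^*`, with their natural types. -/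
def sf1 {X Y : TwoCx R} (f : X ⟶ starCx Y) : X.X1 →ₗ[R] Y.X0 := (TwoHom.f1 f).hom
def sf0 {X Y : TwoCx R} (f : X ⟶ starCx Y) : X.X0 →ₗ[R] Y.X1 := (TwoHom.f0 f).hom

-- ## The middle term associated to `f : X ⟶ Y^*`
def coneCx {X Y : TwoCx R} (f : X ⟶ starCx Y) : TwoCx R where
  X1 := ModuleCat.of R (X.X1 × Y.X1)
  X0 := ModuleCat.of R (X.X0 × Y.X0)
  fin1 := by haveI := X.fin1; haveI := Y.fin1; exact (inferInstance : Module.Finite R (X.X1 × Y.X1))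
  proj1 := by haveI := X.proj1; haveI := Y.proj1; exact (inferInstance : Module.Projective R (X.X1 × Y.X1))
  fin0 := by haveI := X.fin0; haveI := Y.fin0; exact (inferInstance : Module.Finite R (X.X0 × Y.X0))
  proj0 := by haveI := X.proj0; haveI := Y.proj0; exact (inferInstance : Module.Projective R (X.X0 × Y.X0))
  d1 := ModuleCat.ofHom (LinearMap.prod (X.d1.hom ∘ₗ LinearMap.fst R X.X1 Y.X1)
    (Y.d1.hom ∘ₗ LinearMap.snd R X.X1 Y.X1 - sf1 f ∘ₗ LinearMap.fst R X.X1 Y.X1))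
  d0 := ModuleCat.ofHom (LinearMap.prod (X.d0.hom ∘ₗ LinearMap.fst R X.X0 Y.X0)
    (Y.d0.hom ∘ₗ LinearMap.snd R X.X0 Y.X0 - sf0 f ∘ₗ LinearMap.fst R X.X0 Y.X0))
  dd1 := by
    refine ModuleCat.hom_ext (LinearMap.ext fun p => Prod.ext ?_ ?_)
    · show X.d0.hom (X.d1.hom p.1) = 0
      exact LinearMap.congr_fun (congrArg ModuleCat.Hom.hom X.dd1) p.1
    · show Y.d0.hom (Y.d1.hom p.2 - sf1 f p.1) - sf0 f (X.d1.hom p.1) = 0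
      have hY : Y.d0.hom (Y.d1.hom p.2) = 0 :=
        LinearMap.congr_fun (congrArg ModuleCat.Hom.hom Y.dd1) p.2
      have hc : sf0 f (X.d1.hom p.1) = -(Y.d0.hom (sf1 f p.1)) :=
        LinearMap.congr_fun (congrArg ModuleCat.Hom.hom f.comm1) p.1
      rw [map_sub, hY, hc]
      simp
  dd0 := by
    refine ModuleCat.hom_ext (LinearMap.ext fun p => Prod.ext ?_ ?_)
    · show X.d1.hom (X.d0.hom p.1) = 0
      exact LinearMap.congr_fun (congrArg ModuleCat.Hom.hom X.dd0) p.1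
    · show Y.d1.hom (Y.d0.hom p.2 - sf0 f p.1) - sf1 f (X.d0.hom p.1) = 0
      have hY : Y.d1.hom (Y.d0.hom p.2) = 0 :=
        LinearMap.congr_fun (congrArg ModuleCat.Hom.hom Y.dd0) p.2
      have hc : sf1 f (X.d0.hom p.1) = -(Y.d1.hom (sf0 f p.1)) :=
        LinearMap.congr_fun (congrArg ModuleCat.Hom.hom f.comm0) p.1
      rw [map_sub, hY, hc]
      simp

/-- The canonical inclusion `Y ⟶ Z_f`. -/
def coneIn {X Y : TwoCx R} (f : X ⟶ starCx Y) : Y ⟶ coneCx f where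
  f1 := ModuleCat.ofHom (LinearMap.inr R X.X1 Y.X1)
  f0 := ModuleCat.ofHom (LinearMap.inr R X.X0 Y.X0)
  comm1 := by
    refine ModuleCat.hom_ext (LinearMap.ext fun y => Prod.ext ?_ ?_)
    · show (0 : X.X0) = X.d1.hom 0
      simp
    · show Y.d1.hom y = Y.d1.hom y - sf1 f 0
      simp
  comm0 := by
    refine ModuleCat.hom_ext (LinearMap.ext fun y => Prod.ext ?_ ?_)
    · show (0 : X.X1) = X.d0.hom 0
      simp
    · show Y.d0.hom y = Y.d0.hom y - sf0 f 0
      simp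

/-- The canonical projection `Z_f ⟶ X`. -/
def coneOut {X Y : TwoCx R} (f : X ⟶ starCx Y) : coneCx f ⟶ X where
  f1 := ModuleCat.ofHom (LinearMap.fst R X.X1 Y.X1)
  f0 := ModuleCat.ofHom (LinearMap.fst R X.X0 Y.X0)
  comm1 := ModuleCat.hom_ext (LinearMap.ext fun _ => rfl)
  comm0 := ModuleCat.hom_ext (LinearMap.ext fun _ => rfl)

/-- The canonical short exact sequence `0 ⟶ Y ⟶ Z_f ⟶ X ⟶ 0`. -/
def canonSES {X Y : TwoCx R} (f : X ⟶ starCx Y) : SESData Y (coneCx f) X where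
  a := coneIn f
  b := coneOut f
  inj1 := LinearMap.inr_injective
  inj0 := LinearMap.inr_injective
  surj1 := LinearMap.fst_surjective
  surj0 := LinearMap.fst_surjective
  exact1 := LinearMap.range_inr R X.X1 Y.X1
  exact0 := LinearMap.range_inr R X.X0 Y.X0

-- ## scalar endomorphisms
def scalarMod [Algebra ℂ R] (c : ℂ) (M : ModuleCat.{u} R) : M ⟶ M :=
  ModuleCat.ofHom ({ toFun := fun m => algebraMap ℂ R c • m
                     map_add' := fun x y => smul_add _ x y
                     map_smul' := fun r m => by
                       simp only [RingHom.id_apply, smul_smul, Algebra.commutes] } : M →ₗ[R] M)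

def scalarHom [Algebra ℂ R] (c : ℂ) (X : TwoCx R) : X ⟶ X where
  f1 := scalarMod c X.X1
  f0 := scalarMod c X.X0
  comm1 := by
    refine ModuleCat.hom_ext (LinearMap.ext fun x => ?_)
    exact (map_smul X.d1.hom (algebraMap ℂ R c) x).symm
  comm0 := by
    refine ModuleCat.hom_ext (LinearMap.ext fun x => ?_)
    exact (map_smul X.d0.hom (algebraMap ℂ R c) x).symm

end


section Auxiliary

variable {R : Type u} [Ring R]

/-- An isomorphism in `TwoCx` induces an isomorphism on `coker d0` (in degree 1). -/
theorem cokEquiv1 {X Y : TwoCx R} (e : X ≅ Y) :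
    Nonempty ((X.X1 ⧸ LinearMap.range X.d0.hom) ≃ₗ[R] (Y.X1 ⧸ LinearMap.range Y.d0.hom)) := by
  have hf : LinearMap.range X.d0.hom ≤ (LinearMap.range Y.d0.hom).comap (TwoHom.f1 e.hom).hom := by
    rintro _ ⟨y, rfl⟩
    exact ⟨TwoHom.f0 e.hom y, (LinearMap.congr_fun (congrArg ModuleCat.Hom.hom e.hom.comm0) y).symm⟩
  have hg : LinearMap.range Y.d0.hom ≤ (LinearMap.range X.d0.hom).comap (TwoHom.f1 e.inv).hom := by
    rintro _ ⟨y, rfl⟩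
    exact ⟨TwoHom.f0 e.inv y, (LinearMap.congr_fun (congrArg ModuleCat.Hom.hom e.inv.comm0) y).symm⟩
  have hfg : ∀ y : Y.X1, TwoHom.f1 e.hom (TwoHom.f1 e.inv y) = y := by
    intro y
    have h2 : TwoHom.f1 e.inv ≫ TwoHom.f1 e.hom = 𝟙 Y.X1 := by
      rw [← comp_f1, e.inv_hom_id, id_f1]
    exact LinearMap.congr_fun (congrArg ModuleCat.Hom.hom h2) y
  have hgf : ∀ x : X.X1, TwoHom.f1 e.inv (TwoHom.f1 e.hom x) = x := by
    intro x
    have h2 : TwoHom.f1 e.hom ≫ TwoHom.f1 e.inv = 𝟙 X.X1 := by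
      rw [← comp_f1, e.hom_inv_id, id_f1]
    exact LinearMap.congr_fun (congrArg ModuleCat.Hom.hom h2) x
  refine ⟨LinearEquiv.ofLinear (Submodule.mapQ _ _ _ hf) (Submodule.mapQ _ _ _ hg) ?_ ?_⟩
  · refine Submodule.linearMap_qext _ (LinearMap.ext fun y => ?_)
    simp [Submodule.mapQ_apply, hfg y]
  · refine Submodule.linearMap_qext _ (LinearMap.ext fun x => ?_)
    simp [Submodule.mapQ_apply, hgf x]

/-- An isomorphism in `TwoCx` induces an isomorphism on `coker d1` (in degree 0). -/
theorem cokEquiv0 {X Y : TwoCx R} (e : X ≅ Y) :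
    Nonempty ((X.X0 ⧸ LinearMap.range X.d1.hom) ≃ₗ[R] (Y.X0 ⧸ LinearMap.range Y.d1.hom)) := by
  have hf : LinearMap.range X.d1.hom ≤ (LinearMap.range Y.d1.hom).comap (TwoHom.f0 e.hom).hom := by
    rintro _ ⟨y, rfl⟩
    exact ⟨TwoHom.f1 e.hom y, (LinearMap.congr_fun (congrArg ModuleCat.Hom.hom e.hom.comm1) y).symm⟩
  have hg : LinearMap.range Y.d1.hom ≤ (LinearMap.range X.d1.hom).comap (TwoHom.f0 e.inv).hom := by
    rintro _ ⟨y, rfl⟩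
    exact ⟨TwoHom.f1 e.inv y, (LinearMap.congr_fun (congrArg ModuleCat.Hom.hom e.inv.comm1) y).symm⟩
  have hfg : ∀ y : Y.X0, TwoHom.f0 e.hom (TwoHom.f0 e.inv y) = y := by
    intro y
    have h2 : TwoHom.f0 e.inv ≫ TwoHom.f0 e.hom = 𝟙 Y.X0 := by
      rw [← comp_f0, e.inv_hom_id, id_f0]
    exact LinearMap.congr_fun (congrArg ModuleCat.Hom.hom h2) y
  have hgf : ∀ x : X.X0, TwoHom.f0 e.inv (TwoHom.f0 e.hom x) = x := by
    intro x
    have h2 : TwoHom.f0 e.hom ≫ TwoHom.f0 e.inv = 𝟙 X.X0 := by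
      rw [← comp_f0, e.hom_inv_id, id_f0]
    exact LinearMap.congr_fun (congrArg ModuleCat.Hom.hom h2) x
  refine ⟨LinearEquiv.ofLinear (Submodule.mapQ _ _ _ hf) (Submodule.mapQ _ _ _ hg) ?_ ?_⟩
  · refine Submodule.linearMap_qext _ (LinearMap.ext fun y => ?_)
    simp [Submodule.mapQ_apply, hfg y]
  · refine Submodule.linearMap_qext _ (LinearMap.ext fun x => ?_)
    simp [Submodule.mapQ_apply, hgf x]

noncomputable def quotEquivFst {M N : Type u} [AddCommGroup M] [AddCommGroup N] [Module R M]
    [Module R N] :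
    ((M × N) ⧸ LinearMap.range
      (LinearMap.prodMap (0 : M →ₗ[R] M) (LinearMap.id : N →ₗ[R] N))) ≃ₗ[R] M := by
  have hle : LinearMap.range (LinearMap.prodMap (0 : M →ₗ[R] M) (LinearMap.id : N →ₗ[R] N)) ≤
      LinearMap.ker (LinearMap.fst R M N) := by
    rintro _ ⟨z, rfl⟩
    simp [LinearMap.mem_ker, LinearMap.fst_apply, LinearMap.prodMap_apply]
  refine LinearEquiv.ofLinear (Submodule.liftQ _ (LinearMap.fst R M N) hle)
    ((Submodule.mkQ _).comp (LinearMap.inl R M N)) ?_ ?_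
  · refine LinearMap.ext fun m => ?_
    simp [Submodule.liftQ_apply, LinearMap.fst_apply, LinearMap.inl_apply]
  · refine Submodule.linearMap_qext _ (LinearMap.ext fun z => ?_)
    simp only [LinearMap.comp_apply, Submodule.mkQ_apply, Submodule.liftQ_apply,
      LinearMap.inl_apply, LinearMap.fst_apply, LinearMap.id_comp, LinearMap.id_apply]
    rw [Submodule.Quotient.eq]
    refine ⟨(0, -z.2), Prod.ext ?_ ?_⟩ <;>
      simp [LinearMap.prodMap_apply]

noncomputable def quotEquivSnd {M N : Type u} [AddCommGroup M] [AddCommGroup N] [Module R M]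
    [Module R N] :
    ((M × N) ⧸ LinearMap.range
      (LinearMap.prodMap (LinearMap.id : M →ₗ[R] M) (0 : N →ₗ[R] N))) ≃ₗ[R] N := by
  have hle : LinearMap.range (LinearMap.prodMap (LinearMap.id : M →ₗ[R] M) (0 : N →ₗ[R] N)) ≤
      LinearMap.ker (LinearMap.snd R M N) := by
    rintro _ ⟨z, rfl⟩
    simp [LinearMap.mem_ker, LinearMap.snd_apply, LinearMap.prodMap_apply]
  refine LinearEquiv.ofLinear (Submodule.liftQ _ (LinearMap.snd R M N) hle)
    ((Submodule.mkQ _).comp (LinearMap.inr R M N)) ?_ ?_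
  · refine LinearMap.ext fun n => ?_
    simp [Submodule.liftQ_apply, LinearMap.snd_apply, LinearMap.inr_apply]
  · refine Submodule.linearMap_qext _ (LinearMap.ext fun z => ?_)
    simp only [LinearMap.comp_apply, Submodule.mkQ_apply, Submodule.liftQ_apply,
      LinearMap.inr_apply, LinearMap.snd_apply, LinearMap.id_comp, LinearMap.id_apply]
    rw [Submodule.Quotient.eq]
    refine ⟨(-z.1, 0), Prod.ext ?_ ?_⟩ <;>
      simp [LinearMap.prodMap_apply]

theorem cokP (P Q : ModuleCat.{u} R) (hPf : Module.Finite R P) (hPp : Module.Projective R P)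
    (hQf : Module.Finite R Q) (hQp : Module.Projective R Q) :
    Nonempty (((dsum (kP P hPf hPp) (kS Q hQf hQp)).X1 ⧸
      LinearMap.range (dsum (kP P hPf hPp) (kS Q hQf hQp)).d0.hom) ≃ₗ[R] P) :=
  ⟨quotEquivFst (M := P) (N := Q)⟩

theorem cokQ (P Q : ModuleCat.{u} R) (hPf : Module.Finite R P) (hPp : Module.Projective R P)
    (hQf : Module.Finite R Q) (hQp : Module.Projective R Q) :
    Nonempty (((dsum (kP P hPf hPp) (kS Q hQf hQp)).X0 ⧸
      LinearMap.range (dsum (kP P hPf hPp) (kS Q hQf hQp)).d1.hom) ≃ₗ[R] Q) :=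
  ⟨quotEquivSnd (M := P) (N := Q)⟩

end Auxiliary

section Existence

variable {R : Type u} [Ring R]

theorem exists_decomp (X : TwoCx R) (hX : Contractible X) :
    ∃ (P Q : ModuleCat.{u} R) (hPf : Module.Finite R P) (hPp : Module.Projective R P)
      (hQf : Module.Finite R Q) (hQp : Module.Projective R Q),
      Nonempty (X ≅ dsum (kP P hPf hPp) (kS Q hQf hQp)) := by
  obtain ⟨h1, h0, e1, e0⟩ := hX
  haveI : Module.Finite R X.X1 := X.fin1
  haveI : Module.Projective R X.X1 := X.proj1
  haveI : Module.Finite R X.X0 := X.fin0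
  haveI : Module.Projective R X.X0 := X.proj0
  -- pointwise identities
  have L3 : ∀ x : X.X1, X.d0 (X.d1 x) = 0 := fun x => by
    simpa using LinearMap.congr_fun (congrArg ModuleCat.Hom.hom X.dd1) x
  have L4 : ∀ y : X.X0, X.d1 (X.d0 y) = 0 := fun y => by
    simpa using LinearMap.congr_fun (congrArg ModuleCat.Hom.hom X.dd0) y
  have L1 : ∀ x : X.X1, X.d0 (h1 x) + h0 (X.d1 x) = x := by
    intro x
    have h := LinearMap.congr_fun (congrArg ModuleCat.Hom.hom e1) x
    simp only [sub_f1, id_f1, zero_f1, sub_zero] at h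
    simpa [ModuleCat.hom_comp] using h.symm
  have L2 : ∀ y : X.X0, X.d1 (h0 y) + h1 (X.d0 y) = y := by
    intro y
    have h := LinearMap.congr_fun (congrArg ModuleCat.Hom.hom e0) y
    simp only [sub_f0, id_f0, zero_f0, sub_zero] at h
    simpa [ModuleCat.hom_comp] using h.symm
  -- idempotency identities
  have haa' : ∀ x : X.X1, h0 (X.d1 (h0 (X.d1 x))) = h0 (X.d1 x) := by
    intro x
    have h : h0 (X.d1 (X.d0 (h1 x) + h0 (X.d1 x))) = h0 (X.d1 x) := by rw [L1]
    rwa [map_add, map_add, L4, map_zero, zero_add] at h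
  have hba' : ∀ x : X.X1, X.d0 (h1 (h0 (X.d1 x))) = 0 := by
    intro x
    have h := L1 (h0 (X.d1 x))
    rw [haa' x] at h
    rwa [add_eq_right] at h
  have hbb' : ∀ x : X.X1, X.d0 (h1 (X.d0 (h1 x))) = X.d0 (h1 x) := by
    intro x
    have h : X.d0 (h1 (X.d0 (h1 x) + h0 (X.d1 x))) = X.d0 (h1 x) := by rw [L1]
    rwa [map_add, map_add, hba' x, add_zero] at h
  have hab' : ∀ x : X.X1, h0 (X.d1 (X.d0 (h1 x))) = 0 := by
    intro x
    rw [L4, map_zero]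
  have hb0b0 : ∀ y : X.X0, X.d1 (h0 (X.d1 (h0 y))) = X.d1 (h0 y) := by
    intro y
    have h := L2 (X.d1 (h0 y))
    rwa [L3, map_zero, add_zero] at h
  have ha0a0 : ∀ y : X.X0, h1 (X.d0 (h1 (X.d0 y))) = h1 (X.d0 y) := by
    intro y
    have h : h1 (X.d0 (X.d1 (h0 y) + h1 (X.d0 y))) = h1 (X.d0 y) := by rw [L2]
    rwa [map_add, map_add, L3, map_zero, zero_add] at h
  have hd0P : ∀ y : X.X0, h0 (X.d1 (X.d0 y)) = 0 := fun y => by rw [L4, map_zero]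
  -- membership versions
  have haP' : ∀ p : LinearMap.range (h0.hom.comp X.d1.hom), h0 (X.d1 (p : X.X1)) = (p : X.X1) := by
    rintro ⟨_, y, rfl⟩
    exact haa' y
  have haQ' : ∀ q : LinearMap.range (X.d0.hom.comp h1.hom), h0 (X.d1 (q : X.X1)) = 0 := by
    rintro ⟨_, y, rfl⟩
    exact hab' y
  have hbP' : ∀ p : LinearMap.range (h0.hom.comp X.d1.hom), X.d0 (h1 (p : X.X1)) = 0 := by
    rintro ⟨_, y, rfl⟩
    exact hba' y
  have hbQ' : ∀ q : LinearMap.range (X.d0.hom.comp h1.hom), X.d0 (h1 (q : X.X1)) = (q : X.X1) := by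
    rintro ⟨_, y, rfl⟩
    exact hbb' y
  have hd1Q : ∀ q : LinearMap.range (X.d0.hom.comp h1.hom), X.d1 (q : X.X1) = 0 := by
    rintro ⟨_, y, rfl⟩
    exact L4 (h1 y)
  have hcrossQ : ∀ q : LinearMap.range (X.d0.hom.comp h1.hom), X.d1 (h0 (h1 (q : X.X1))) = 0 := by
    rintro ⟨_, y, rfl⟩
    have h := L2 (h1 (X.d0 (h1 y)))
    rw [hbb' y] at h
    rwa [add_eq_right] at h
  refine ⟨ModuleCat.of R (LinearMap.range (h0.hom.comp X.d1.hom)),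
    ModuleCat.of R (LinearMap.range (X.d0.hom.comp h1.hom)),
    Module.Finite.range (h0.hom.comp X.d1.hom),
    Module.Projective.of_split (LinearMap.range (h0.hom.comp X.d1.hom)).subtype
      (LinearMap.codRestrict (LinearMap.range (h0.hom.comp X.d1.hom)) (h0.hom.comp X.d1.hom)
        fun x => LinearMap.mem_range_self _ x)
      (LinearMap.ext fun p => Subtype.ext (haP' p)),
    Module.Finite.range (X.d0.hom.comp h1.hom),
    Module.Projective.of_split (LinearMap.range (X.d0.hom.comp h1.hom)).subtype
      (LinearMap.codRestrict (LinearMap.range (X.d0.hom.comp h1.hom)) (X.d0.hom.comp h1.hom)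
        fun x => LinearMap.mem_range_self _ x)
      (LinearMap.ext fun q => Subtype.ext (hbQ' q)),
    ⟨⟨⟨ModuleCat.ofHom (LinearMap.prod
          (LinearMap.codRestrict (LinearMap.range (h0.hom.comp X.d1.hom)) (h0.hom.comp X.d1.hom)
            fun x => LinearMap.mem_range_self _ x)
          (LinearMap.codRestrict (LinearMap.range (X.d0.hom.comp h1.hom)) (X.d0.hom.comp h1.hom)
            fun x => LinearMap.mem_range_self _ x)),
        ModuleCat.ofHom (LinearMap.prod
          (LinearMap.codRestrict (LinearMap.range (h0.hom.comp X.d1.hom)) ((h0.hom.comp X.d1.hom).comp h0.hom)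
            fun y => LinearMap.mem_range_self _ (h0 y))
          (LinearMap.codRestrict (LinearMap.range (X.d0.hom.comp h1.hom)) ((X.d0.hom.comp h1.hom).comp X.d0.hom)
            fun y => LinearMap.mem_range_self _ (X.d0 y))),
        ?_, ?_⟩,
      ⟨ModuleCat.ofHom (LinearMap.coprod (LinearMap.range (h0.hom.comp X.d1.hom)).subtype
          (LinearMap.range (X.d0.hom.comp h1.hom)).subtype),
        ModuleCat.ofHom (LinearMap.coprod (X.d1.hom.comp (LinearMap.range (h0.hom.comp X.d1.hom)).subtype)
          (h1.hom.comp (LinearMap.range (X.d0.hom.comp h1.hom)).subtype)),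
        ?_, ?_⟩, ?_, ?_⟩⟩⟩
  -- f.comm1
  · refine ModuleCat.hom_ext <| LinearMap.ext fun x => Prod.ext (Subtype.ext ?_) (Subtype.ext ?_)
    · show h0 (X.d1 (h0 (X.d1 x))) = h0 (X.d1 x)
      exact haa' x
    · show X.d0 (h1 (X.d0 (X.d1 x))) = 0
      rw [L3, map_zero, map_zero]
  -- f.comm0
  · refine ModuleCat.hom_ext <| LinearMap.ext fun y => Prod.ext (Subtype.ext ?_) (Subtype.ext ?_)
    · show h0 (X.d1 (X.d0 y)) = 0
      exact hd0P y
    · rfl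
  -- g.comm1
  · refine ModuleCat.hom_ext <| LinearMap.ext fun z => ?_
    obtain ⟨p, q⟩ := z
    show X.d1 p.1 + h1 (0 : X.X1) = X.d1 (p.1 + q.1)
    rw [map_zero, add_zero, map_add, hd1Q q, add_zero]
  -- g.comm0
  · refine ModuleCat.hom_ext <| LinearMap.ext fun z => ?_
    obtain ⟨p, q⟩ := z
    show (0 : X.X1) + q.1 = X.d0 (X.d1 p.1 + h1 q.1)
    rw [zero_add, map_add, L3, hbQ' q, zero_add]
  -- hom_inv_id
  · refine hom_ext ?_ ?_
    · refine ModuleCat.hom_ext <| LinearMap.ext fun x => ?_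
      show h0 (X.d1 x) + X.d0 (h1 x) = x
      rw [add_comm]
      exact L1 x
    · refine ModuleCat.hom_ext <| LinearMap.ext fun y => ?_
      show X.d1 (h0 (X.d1 (h0 y))) + h1 (X.d0 (h1 (X.d0 y))) = y
      rw [hb0b0, ha0a0]
      exact L2 y
  -- inv_hom_id
  · refine hom_ext ?_ ?_
    · refine ModuleCat.hom_ext <| LinearMap.ext fun z => ?_
      obtain ⟨p, q⟩ := z
      refine Prod.ext (Subtype.ext ?_) (Subtype.ext ?_)
      · show h0 (X.d1 (p.1 + q.1)) = p.1
        rw [map_add, map_add, haP' p, haQ' q, add_zero]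
      · show X.d0 (h1 (p.1 + q.1)) = q.1
        rw [map_add, map_add, hbP' p, hbQ' q, zero_add]
    · refine ModuleCat.hom_ext <| LinearMap.ext fun z => ?_
      obtain ⟨p, q⟩ := z
      refine Prod.ext (Subtype.ext ?_) (Subtype.ext ?_)
      · show h0 (X.d1 (h0 (X.d1 p.1 + h1 q.1))) = p.1
        simp only [map_add]
        rw [haa', haP' p, hcrossQ q, map_zero, add_zero]
      · show X.d0 (h1 (X.d0 (X.d1 p.1 + h1 q.1))) = q.1
        simp only [map_add]
        rw [L3, map_zero, map_zero, zero_add, hbQ' q, hbQ' q]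

end Existence

/-- If `X` is a contractible object of `C₂(P)` then there are finitely
generated projective right `A`-modules `P`, `Q`, unique up to isomorphism of `A`-modules,
with `X ≅ K_P ⊕ K_Q^*` in `C₂(P)`. (Right `A`-modules are modules over `Aᵐᵒᵖ`.) -/
theorem statement_0 {A : Type u} [Ring A] [Algebra ℂ A] [FiniteDimensional ℂ A]
    (X : TwoCx Aᵐᵒᵖ) (hX : Contractible X) :
    (∃ (P Q : ModuleCat.{u} Aᵐᵒᵖ) (hPf : Module.Finite Aᵐᵒᵖ P) (hPp : Module.Projective Aᵐᵒᵖ P)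
        (hQf : Module.Finite Aᵐᵒᵖ Q) (hQp : Module.Projective Aᵐᵒᵖ Q),
        Nonempty (X ≅ dsum (kP P hPf hPp) (kS Q hQf hQp))) ∧
    (∀ (P Q P' Q' : ModuleCat.{u} Aᵐᵒᵖ)
        (hPf : Module.Finite Aᵐᵒᵖ P) (hPp : Module.Projective Aᵐᵒᵖ P)
        (hQf : Module.Finite Aᵐᵒᵖ Q) (hQp : Module.Projective Aᵐᵒᵖ Q)
        (hPf' : Module.Finite Aᵐᵒᵖ P') (hPp' : Module.Projective Aᵐᵒᵖ P')
        (hQf' : Module.Finite Aᵐᵒᵖ Q') (hQp' : Module.Projective Aᵐᵒᵖ Q'),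
        Nonempty (X ≅ dsum (kP P hPf hPp) (kS Q hQf hQp)) →
        Nonempty (X ≅ dsum (kP P' hPf' hPp') (kS Q' hQf' hQp')) →
        Nonempty (P ≃ₗ[Aᵐᵒᵖ] P') ∧ Nonempty (Q ≃ₗ[Aᵐᵒᵖ] Q')) := by
  constructor
  · exact exists_decomp X hX
  · rintro P Q P' Q' hPf hPp hQf hQp hPf' hPp' hQf' hQp' ⟨i⟩ ⟨i'⟩
    obtain ⟨eP⟩ := cokP P Q hPf hPp hQf hQp
    obtain ⟨eP'⟩ := cokP P' Q' hPf' hPp' hQf' hQp'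
    obtain ⟨eQ⟩ := cokQ P Q hPf hPp hQf hQp
    obtain ⟨eQ'⟩ := cokQ P' Q' hPf' hPp' hQf' hQp'
    obtain ⟨f1⟩ := cokEquiv1 (i.symm ≪≫ i')
    obtain ⟨f0⟩ := cokEquiv0 (i.symm ≪≫ i')
    exact ⟨⟨eP.symm.trans (f1.trans eP')⟩, ⟨eQ.symm.trans (f0.trans eQ')⟩⟩
end

section
/- Let T be a ℂ-linear pretriangulated category with shift ⟦1⟧, let Z be an object with End_T(Z) a local ring, and let Y →f→ Z →g→ X →h→ Y⟦1⟧ be a distinguished triangle. Then the set S = {γ − 1_Z | γ ∈ Aut_T(Z), γ ∘ f = f, g ∘ γ = g} is a ℂ-linear subspace of End_T(Z). -/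
open CategoryTheory CategoryTheory.Limits CategoryTheory.Pretriangulated

universe v u

/-- Given a distinguished triangle `Y ⟶ Z ⟶ X ⟶ Y⟦1⟧` in a ℂ-linear
pretriangulated category with `End Z` local, the set
`{γ − 1_Z | γ ∈ Aut Z, γ∘f = f, g∘γ = g}` is a ℂ-linear subspace of `End Z`. -/
theorem statement_13 {C : Type u} [Category.{v} C] [Preadditive C] [CategoryTheory.Linear ℂ C]
    [HasZeroObject C] [HasShift C ℤ] [∀ n : ℤ, (shiftFunctor C n).Additive] [Pretriangulated C]
    {X Y Z : C} (hZ : IsLocalRing (End Z))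
    (f : Y ⟶ Z) (g : Z ⟶ X) (h : X ⟶ (Y⟦(1 : ℤ)⟧))
    (hT : Triangle.mk f g h ∈ distTriang C) :
    ∃ S : Submodule ℂ (Z ⟶ Z),
      (S : Set (Z ⟶ Z)) =
        {p | ∃ γ : Aut Z, f ≫ γ.hom = f ∧ γ.hom ≫ g = g ∧ p = γ.hom - 𝟙 Z} := by
  refine ⟨{ carrier := {u | f ≫ u = 0 ∧ u ≫ g = 0}
            add_mem' := ?_
            zero_mem' := ?_
            smul_mem' := ?_ }, ?_⟩
  · rintro a b ⟨ha1, ha2⟩ ⟨hb1, hb2⟩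
    constructor <;> simp [Preadditive.comp_add, Preadditive.add_comp, ha1, ha2, hb1, hb2]
  · constructor <;> simp
  · rintro c u ⟨h1, h2⟩
    constructor <;> simp [Linear.comp_smul, Linear.smul_comp, h1, h2]
  · ext u
    simp only [Submodule.coe_set_mk, AddSubmonoid.coe_set_mk, AddSubsemigroup.coe_set_mk,
      Set.mem_setOf_eq]
    constructor
    · rintro ⟨h1, h2⟩
      obtain ⟨v, hv⟩ := Triangle.coyoneda_exact₂ _ hT u h2
      dsimp only [Triangle.mk] at hv
      have hu2 : u ≫ u = 0 := by
        calc u ≫ u = v ≫ (f ≫ u) := by rw [hv]; exact Category.assoc _ _ _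
        _ = 0 := by exact (congrArg (fun w => v ≫ w) h1).trans Limits.comp_zero
      refine ⟨⟨𝟙 Z + u, 𝟙 Z - u, ?_, ?_⟩, ?_, ?_, by simp⟩
      · simp [Preadditive.comp_add, Preadditive.add_comp, Preadditive.comp_sub,
          Preadditive.sub_comp, hu2]
      · simp [Preadditive.comp_add, Preadditive.add_comp, Preadditive.comp_sub,
          Preadditive.sub_comp, hu2]
      · simp [Preadditive.comp_add, h1]
      · simp [Preadditive.add_comp, h2]
    · rintro ⟨γ, h1, h2, rfl⟩
      constructor
      · simp [Preadditive.comp_sub, h1]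
      · simp [Preadditive.sub_comp, h2]
end

section
/- Let T be a ℂ-linear pretriangulated category with shift ⟦1⟧, and let X and Y be objects with End_T(X) and End_T(Y) local rings and X ≇ Y. Let Y →f→ X ⊕ Y →g→ X →0→ Y⟦1⟧ be a distinguished triangle with zero connecting morphism, and write f = (f₁, f₂)ᵀ (f₁ : Y → X, f₂ : Y → Y) and g = (g₁, g₂) (g₁ : X → X, g₂ : Y → X). Then f₂ and g₁ are isomorphisms and g₁ ∘ f₁ + g₂ ∘ f₂ = 0; consequently the triangle is isomorphic, via the automorphisms g₁⁻¹ of X and f₂ of Y and the identity on X ⊕ Y, to the triangle Y →(θ,1)ᵀ→ X ⊕ Y →(1,−θ)→ X →0→ Y⟦1⟧ with θ = f₁ ∘ f₂⁻¹ ∈ Hom_T(Y, X). -/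
open CategoryTheory CategoryTheory.Limits CategoryTheory.Pretriangulated

universe v u

private lemma idem_aux {R : Type*} [Ring R] [IsLocalRing R] {e : R} (he : e * e = e) :
    e = 0 ∨ e = 1 := by
  rcases IsLocalRing.isUnit_or_isUnit_of_add_one (a := e) (b := 1 - e) (by abel) with h | h
  · right
    exact h.mul_left_cancel (by rw [he, mul_one])
  · left
    have h2 : (1 - e) * (1 - e) = (1 - e) * 1 := by
      rw [mul_one, sub_mul, one_mul, mul_sub, mul_one, he]
      abel
    have h3 := h.mul_left_cancel h2
    rwa [sub_eq_self] at h3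

private lemma unit_of_mul_one {R : Type*} [Ring R] [IsLocalRing R] {a b : R} (h : a * b = 1) :
    IsUnit a ∧ IsUnit b := by
  have he : (b * a) * (b * a) = b * a := by
    rw [mul_assoc, ← mul_assoc a b a, h, one_mul]
  rcases idem_aux he with h0 | h1
  · exfalso
    have h10 : (1 : R) = 0 := by
      calc (1 : R) = (a * b) * (a * b) := by rw [h, one_mul]
        _ = a * ((b * a) * b) := by rw [mul_assoc, ← mul_assoc b a b]
        _ = 0 := by rw [h0, zero_mul, mul_zero]
    exact one_ne_zero h10
  · exact ⟨⟨⟨a, b, h, h1⟩, rfl⟩, ⟨⟨b, a, h1, h⟩, rfl⟩⟩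

private lemma unit_of_mul_unit {R : Type*} [Ring R] [IsLocalRing R] {a b : R}
    (h : IsUnit (a * b)) : IsUnit a ∧ IsUnit b := by
  obtain ⟨u, hu⟩ := h
  constructor
  · exact (unit_of_mul_one (a := a) (b := b * ↑u⁻¹)
      (by rw [← mul_assoc, ← hu, Units.mul_inv])).1
  · exact (unit_of_mul_one (a := ↑u⁻¹ * a) (b := b)
      (by rw [mul_assoc, ← hu, Units.inv_mul])).2

private lemma no_retract_aux {C : Type u} [Category.{v} C] [Preadditive C] {X Y : C}
    (hX : IsLocalRing (End X)) (hY : Nontrivial (End Y)) (hne : IsEmpty (X ≅ Y))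
    (u : Y ⟶ X) (v : X ⟶ Y) (h : IsUnit (show End Y from u ≫ v)) : False := by
  haveI := hX
  haveI : IsIso (u ≫ v) := (isUnit_iff_isIso _).1 h
  set b : X ⟶ Y := v ≫ inv (u ≫ v) with hb
  have hab : u ≫ b = 𝟙 Y := by rw [hb, ← Category.assoc, IsIso.hom_inv_id]
  have hidem : (show End X from b ≫ u) * (show End X from b ≫ u)
      = (show End X from b ≫ u) := by
    show (b ≫ u) ≫ (b ≫ u) = b ≫ u
    calc (b ≫ u) ≫ b ≫ u = b ≫ (u ≫ b) ≫ u := by simp only [Category.assoc]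
      _ = b ≫ u := by rw [hab, Category.id_comp]
  rcases idem_aux hidem with h0 | h1
  · have h0' : b ≫ u = (0 : X ⟶ X) := h0
    have h10 : (𝟙 Y : Y ⟶ Y) = 0 := by
      calc (𝟙 Y : Y ⟶ Y) = (u ≫ b) ≫ (u ≫ b) := by rw [hab, Category.id_comp]
        _ = u ≫ (b ≫ u) ≫ b := by simp only [Category.assoc]
        _ = 0 := by rw [h0', Limits.zero_comp, Limits.comp_zero]
    have h11 : (1 : End Y) = 0 := h10
    exact one_ne_zero h11
  · have h1' : b ≫ u = 𝟙 X := h1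
    exact hne.false ⟨b, u, h1', hab⟩

/-- Let `Y ⟶f⟶ X ⊞ Y ⟶g⟶ X ⟶0⟶ Y⟦1⟧` be a distinguished triangle with
`End X`, `End Y` local and `X ≇ Y`. Then `f₂ = snd ∘ f` and `g₁ = g ∘ inl` are isomorphisms,
`g₁∘f₁ + g₂∘f₂ = 0`, and with `θ = f₁ ∘ f₂⁻¹` the triangle is isomorphic — via `f₂` on `Y`,
the identity on `X ⊞ Y` and `g₁⁻¹` on `X` — to `Y ⟶(θ,1)ᵀ⟶ X ⊞ Y ⟶(1,−θ)⟶ X ⟶0⟶ Y⟦1⟧`. -/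
theorem statement_16 {C : Type u} [Category.{v} C] [Preadditive C] [CategoryTheory.Linear ℂ C]
    [HasZeroObject C] [HasShift C ℤ] [∀ n : ℤ, (shiftFunctor C n).Additive] [Pretriangulated C]
    [HasBinaryBiproducts C]
    {X Y : C} (hX : IsLocalRing (End X)) (hY : IsLocalRing (End Y)) (hne : IsEmpty (X ≅ Y))
    (f : Y ⟶ X ⊞ Y) (g : X ⊞ Y ⟶ X)
    (hT : Triangle.mk f g (0 : X ⟶ (Y⟦(1 : ℤ)⟧)) ∈ distTriang C) :
    IsIso (f ≫ biprod.snd) ∧ IsIso (biprod.inl ≫ g) ∧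
    (f ≫ biprod.fst) ≫ biprod.inl ≫ g + (f ≫ biprod.snd) ≫ biprod.inr ≫ g = 0 ∧
    ∃ θ : Y ⟶ X, (f ≫ biprod.snd) ≫ θ = f ≫ biprod.fst ∧
      ∃ e : Triangle.mk f g (0 : X ⟶ (Y⟦(1 : ℤ)⟧)) ≅
            Triangle.mk (biprod.lift θ (𝟙 Y)) (biprod.desc (𝟙 X) (-θ))
              (0 : X ⟶ (Y⟦(1 : ℤ)⟧)),
        e.hom.hom₁ = f ≫ biprod.snd ∧ e.hom.hom₂ = 𝟙 (X ⊞ Y) ∧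
        (biprod.inl ≫ g) ≫ e.hom.hom₃ = 𝟙 X := by
  haveI := hX; haveI := hY
  have hfg : f ≫ g = 0 := comp_distTriang_mor_zero₁₂ _ hT
  have key : ∀ {A B : C} (p : A ⟶ X ⊞ Y) (q : X ⊞ Y ⟶ B),
      (p ≫ biprod.fst) ≫ biprod.inl ≫ q + (p ≫ biprod.snd) ≫ biprod.inr ≫ q = p ≫ q := by
    intro A B p q
    rw [Category.assoc, Category.assoc, ← Preadditive.comp_add,
      ← Category.assoc biprod.fst, ← Category.assoc biprod.snd, ← Preadditive.add_comp,
      biprod.total, Category.id_comp]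
  have hsum : (f ≫ biprod.fst) ≫ biprod.inl ≫ g + (f ≫ biprod.snd) ≫ biprod.inr ≫ g = 0 := by
    rw [key, hfg]
  -- retraction of f
  obtain ⟨r, hr⟩ : ∃ r : X ⊞ Y ⟶ Y, 𝟙 Y = f ≫ r := Triangle.yoneda_exact₂ _ (inv_rot_of_distTriang _ hT) (𝟙 Y)
    (by simp [Triangle.invRotate]; erw [Functor.map_zero, Limits.zero_comp, neg_zero, Category.comp_id]; rfl)
  change 𝟙 Y = f ≫ r at hr
  -- section of g
  obtain ⟨s, hs⟩ : ∃ s : X ⟶ X ⊞ Y, 𝟙 X = s ≫ g := Triangle.coyoneda_exact₃ _ hT (𝟙 X) (by simp; exact Limits.comp_zero)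
  change 𝟙 X = s ≫ g at hs
  -- f ≫ snd is an isomorphism
  have hr' : (show End Y from (f ≫ biprod.fst) ≫ biprod.inl ≫ r)
      + (show End Y from (f ≫ biprod.snd) ≫ biprod.inr ≫ r) = 1 := by
    show (f ≫ biprod.fst) ≫ biprod.inl ≫ r + (f ≫ biprod.snd) ≫ biprod.inr ≫ r = 𝟙 Y
    rw [key]; exact hr.symm
  have hu2 : IsUnit (show End Y from(f ≫ biprod.snd) ≫ biprod.inr ≫ r) := by
    rcases IsLocalRing.isUnit_or_isUnit_of_add_one hr' with h | h
    · exact absurd h (fun h => no_retract_aux hX (by infer_instance) hne _ _ h)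
    · exact h
  have hf2 : IsIso (f ≫ biprod.snd) := by
    rw [← isUnit_iff_isIso]
    have heq : (show End Y from (f ≫ biprod.snd) ≫ biprod.inr ≫ r)
        = (show End Y from biprod.inr ≫ r) * (show End Y from f ≫ biprod.snd) := rfl
    rw [heq] at hu2
    exact (unit_of_mul_unit hu2).2
  -- inl ≫ g is an isomorphism
  have hs' : (show End X from (s ≫ biprod.fst) ≫ biprod.inl ≫ g)
      + (show End X from (s ≫ biprod.snd) ≫ biprod.inr ≫ g) = 1 := by
    show (s ≫ biprod.fst) ≫ biprod.inl ≫ g + (s ≫ biprod.snd) ≫ biprod.inr ≫ g = 𝟙 X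
    rw [key]; exact hs.symm
  have hneYX : IsEmpty (Y ≅ X) := ⟨fun e => hne.false e.symm⟩
  have hu1 : IsUnit (show End X from (s ≫ biprod.fst) ≫ biprod.inl ≫ g) := by
    rcases IsLocalRing.isUnit_or_isUnit_of_add_one hs' with h | h
    · exact h
    · exact absurd h (fun h => no_retract_aux hY (by infer_instance) hneYX _ _ h)
  have hg1 : IsIso (biprod.inl ≫ g) := by
    rw [← isUnit_iff_isIso]
    have heq : (show End X from (s ≫ biprod.fst) ≫ biprod.inl ≫ g)
        = (show End X from biprod.inl ≫ g) * (show End X from s ≫ biprod.fst) := rfl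
    rw [heq] at hu1
    exact (unit_of_mul_unit hu1).1
  haveI := hf2; haveI := hg1
  refine ⟨hf2, hg1, hsum, inv (f ≫ biprod.snd) ≫ (f ≫ biprod.fst), ?_, ?_⟩
  · rw [IsIso.hom_inv_id_assoc]
  · set θ : Y ⟶ X := inv (f ≫ biprod.snd) ≫ (f ≫ biprod.fst) with hθ
    have hθ2 : (f ≫ biprod.snd) ≫ θ = f ≫ biprod.fst := by rw [hθ, IsIso.hom_inv_id_assoc]
    have h2 : (f ≫ biprod.snd) ≫ (θ ≫ biprod.inl ≫ g + biprod.inr ≫ g) = 0 := by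
      rw [Preadditive.comp_add, ← Category.assoc (f ≫ biprod.snd) θ, hθ2]
      exact hsum
    have h3 : θ ≫ biprod.inl ≫ g + biprod.inr ≫ g = 0 :=
      (cancel_epi (f ≫ biprod.snd)).1 (by rw [h2, Limits.comp_zero])
    have hg2 : biprod.inr ≫ g = -(θ ≫ biprod.inl ≫ g) :=
      eq_neg_of_add_eq_zero_right h3
    have hcomm1 : (f ≫ biprod.snd) ≫ biprod.lift θ (𝟙 Y) = f := by
      apply biprod.hom_ext
      · rw [Category.assoc, biprod.lift_fst, hθ2]
      · rw [Category.assoc, biprod.lift_snd, Category.comp_id]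
    refine ⟨Triangle.isoMk _ _ (@asIso _ _ _ _ (f ≫ biprod.snd) hf2) (Iso.refl _)
      (@asIso _ _ _ _ (biprod.inl ≫ g) hg1).symm ?_ ?_ ?_, rfl, rfl, ?_⟩
    · dsimp
      change f ≫ 𝟙 (X ⊞ Y) = (f ≫ biprod.snd) ≫ biprod.lift θ (𝟙 Y)
      rw [Category.comp_id, hcomm1]
    · dsimp
      change g ≫ inv (biprod.inl ≫ g) = 𝟙 (X ⊞ Y) ≫ biprod.desc (𝟙 X) (-θ)
      rw [Category.id_comp]
      apply biprod.hom_ext'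
      · rw [← Category.assoc, IsIso.hom_inv_id, biprod.inl_desc]
      · rw [← Category.assoc, hg2, biprod.inr_desc, Preadditive.neg_comp,
          Category.assoc θ (biprod.inl ≫ g) (inv (biprod.inl ≫ g)),
          IsIso.hom_inv_id, Category.comp_id]
    · exact Limits.zero_comp.trans Limits.comp_zero.symm
    · exact IsIso.hom_inv_id _
end
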